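/- Suppose the data points x₁,…,xₙ are affinely independent. Then there exists a vector v lying in the vectorSpan of the data that gives complete data piling, and it is unique up to nonzero scalar multiple: if v and v' both lie in the vectorSpan of the data and both give complete data piling, then v' = t • v for some real t ≠ 0. -/

import Mathlib

open scoped RealInnerProductSpace BigOperators

variable {E : Type*} [NormedAddCommGroup E] [InnerProductSpace ℝ E]

/-- A vector `v` gives complete data piling for the labeled data `(x, y)`. -/
def Piling {n : ℕ} (x : Fin n → E) (y : Fin n → ℝ) (v : E) : Prop :=
  ∃ a b : ℝ, a ≠ 0 ∧ ∀ i, ⟪v, x i⟫ = a * y i + b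

theorem affine_piling_exists_unique {n : ℕ} (x : Fin n → E) (y : Fin n → ℝ)
    (hy : ∀ i, y i = 1 ∨ y i = -1)
    (hpos : ∃ i, y i = 1) (hneg : ∃ i, y i = -1)
    (hind : AffineIndependent ℝ x) :
    (∃ v ∈ vectorSpan ℝ (Set.range x), Piling x y v) ∧
      ∀ v v' : E, v ∈ vectorSpan ℝ (Set.range x) → v' ∈ vectorSpan ℝ (Set.range x) →
        Piling x y v → Piling x y v' → ∃ t : ℝ, t ≠ 0 ∧ v' = t • v := by
  obtain ⟨i₀, hi₀⟩ := hpos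
  constructor
  · -- existence
    have hli : LinearIndependent ℝ (fun i : {j // j ≠ i₀} => x (i : Fin n) -ᵥ x i₀) :=
      (affineIndependent_iff_linearIndependent_vsub ℝ x i₀).1 hind
    set S := Submodule.span ℝ (Set.range fun i : {j // j ≠ i₀} => x (i : Fin n) -ᵥ x i₀) with hSdef
    have hV : vectorSpan ℝ (Set.range x) = S :=
      vectorSpan_range_eq_span_range_vsub_right_ne ℝ x i₀
    haveI : FiniteDimensional ℝ S := FiniteDimensional.span_of_finite ℝ (Set.finite_range _)
    let b : Module.Basis {j // j ≠ i₀} ℝ S := Module.Basis.span hli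
    let ℓ : S →ₗ[ℝ] ℝ := b.constr ℝ (fun i => y (i : Fin n) - y i₀)
    let v₀ : S := (InnerProductSpace.toDual ℝ S).symm (LinearMap.toContinuousLinearMap ℓ)
    have hv₀ : ∀ w : S, ⟪(v₀ : E), (w : E)⟫ = ℓ w := by
      intro w
      have h1 : ⟪v₀, w⟫ = (LinearMap.toContinuousLinearMap ℓ) w :=
        InnerProductSpace.toDual_symm_apply
      simpa using h1
    have key : ∀ i : Fin n, i ≠ i₀ → ⟪(v₀ : E), x i - x i₀⟫ = y i - y i₀ := by
      intro i hi
      have hmem : x i -ᵥ x i₀ ∈ S := Submodule.subset_span ⟨⟨i, hi⟩, rfl⟩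
      have hb : ((b ⟨i, hi⟩ : S) : E) = x i -ᵥ x i₀ := congrArg Subtype.val (Module.Basis.span_apply hli ⟨i, hi⟩)
      have : ⟪(v₀ : E), ((b ⟨i, hi⟩ : S) : E)⟫ = ℓ (b ⟨i, hi⟩) := hv₀ _
      rw [hb] at this
      rw [vsub_eq_sub] at this
      rw [this]
      simp [ℓ, Module.Basis.constr_basis]
    refine ⟨(v₀ : E), by rw [hV]; exact v₀.2, 1, ⟪(v₀ : E), x i₀⟫ - y i₀, one_ne_zero, ?_⟩
    intro i
    by_cases hi : i = i₀
    · subst hi; ring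
    · have := key i hi
      rw [inner_sub_right] at this
      linarith
  · -- uniqueness
    rintro v v' hv hv' ⟨a, c, ha, h⟩ ⟨a', c', ha', h'⟩
    refine ⟨a' / a, div_ne_zero ha' ha, ?_⟩
    set t := a' / a
    set w := v' - t • v with hw
    have hwmem : w ∈ vectorSpan ℝ (Set.range x) :=
      Submodule.sub_mem _ hv' (Submodule.smul_mem _ _ hv)
    have hdiff : ∀ i j : Fin n, ⟪w, x i - x j⟫ = 0 := by
      intro i j
      have h1 : ⟪v, x i - x j⟫ = a * (y i - y j) := by
        rw [inner_sub_right, h i, h j]; ring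
      have h2 : ⟪v', x i - x j⟫ = a' * (y i - y j) := by
        rw [inner_sub_right, h' i, h' j]; ring
      have : ⟪w, x i - x j⟫ = a' * (y i - y j) - t * (a * (y i - y j)) := by
        rw [hw, inner_sub_left, inner_smul_left, h1, h2]; norm_num
      rw [this]
      have : t * a = a' := div_mul_cancel₀ a' ha
      linear_combination (-(y i - y j)) * this
    have horth : ∀ u ∈ vectorSpan ℝ (Set.range x), ⟪w, u⟫ = 0 := by
      intro u hu
      induction hu using Submodule.span_induction with
      | mem u hu =>
        obtain ⟨p, ⟨i, rfl⟩, q, ⟨j, rfl⟩, rfl⟩ := hu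
        simpa [vsub_eq_sub] using hdiff i j
      | zero => simp
      | add u₁ u₂ _ _ h₁ h₂ => rw [inner_add_right, h₁, h₂]; ring
      | smul r u _ h₁ => rw [real_inner_smul_right, h₁]; ring
    have : w = 0 := by
      have := horth w hwmem
      exact inner_self_eq_zero.mp this
    exact sub_eq_zero.mp this
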